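/- Let μ be a probability measure on ℝ, let H = L²(ℝ, B(ℝ), μ) be separable with Hilbert basis (e_j)_{j∈ℕ}, and define: Φ(h) = the L²(ν)-limit of Σ_{k=0}^{n} ⟨h, e_k⟩·X_k; φ^{(2)}(f) = the L²(ν)-limit of Σ_{j=0}^{N} ⟨f, e_j ⊗ e_j⟩·(X_j² − 1) for f ∈ H ⊗ H; and φ^{(1,1)}(f) = the L²(ν)-limit of Σ_{j=1}^{N} (Σ_{k=0}^{j−1} ⟨f, e_j ⊗ e_k⟩·X_k)·X_j for f ∈ H ⊗ H (all these limits exist). Then for all h, g ∈ H, the product Φ(h)·Φ(g) belongs to L²(ν), and in L²(ν): Φ(h)·Φ(g) = φ^{(2)}(h ⊗ g) + φ^{(1,1)}(h ⊗ g + g ⊗ h) + ⟨h, g⟩·1. -/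

import Mathlib

open MeasureTheory Filter

lemma stmt18_expand (a b x : ℕ → ℝ) (n : ℕ) :
    (∑ k ∈ Finset.range (n+1), a k * x k) * (∑ k ∈ Finset.range (n+1), b k * x k)
    = (∑ j ∈ Finset.range (n+1), a j * b j * (x j ^ 2 - 1))
      + (∑ j ∈ Finset.Icc 1 n, (∑ k ∈ Finset.range j, (a j * b k + b j * a k) * x k) * x j)
      + ∑ j ∈ Finset.range (n+1), a j * b j := by
  induction n with
  | zero => simp; ring
  | succ n ih =>
    have hsplit : ∑ k ∈ Finset.range (n+1), (a (n+1) * b k + b (n+1) * a k) * x k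
        = a (n+1) * ∑ k ∈ Finset.range (n+1), b k * x k
          + b (n+1) * ∑ k ∈ Finset.range (n+1), a k * x k := by
      rw [Finset.mul_sum, Finset.mul_sum, ← Finset.sum_add_distrib]
      exact Finset.sum_congr rfl fun k _ => by ring
    rw [Finset.sum_range_succ (f := fun k => a k * x k),
      Finset.sum_range_succ (f := fun k => b k * x k),
      Finset.sum_range_succ (f := fun j => a j * b j * (x j ^ 2 - 1)),
      Finset.sum_range_succ (f := fun j => a j * b j),
      Finset.sum_Icc_succ_top (Nat.le_add_left 1 n), hsplit]
    nlinarith [ih]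

lemma stmt18_parseval (μ : Measure ℝ) [IsProbabilityMeasure μ]
    (e : ℕ → ℝ → ℝ) (he2 : ∀ j, MemLp (e j) 2 μ)
    (horth : ∀ j k, ∫ x, e j x * e k x ∂μ = if j = k then (1 : ℝ) else 0)
    (htotal : ∀ f : ℝ → ℝ, MemLp f 2 μ →
      (∀ j, ∫ x, f x * e j x ∂μ = 0) → f =ᵐ[μ] 0)
    (h g : ℝ → ℝ) (hh : MemLp h 2 μ) (hg : MemLp g 2 μ) :
    Tendsto (fun n : ℕ => ∑ j ∈ Finset.range (n+1),
      (∫ x, h x * e j x ∂μ) * (∫ x, g x * e j x ∂μ)) atTop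
      (nhds (∫ x, h x * g x ∂μ)) := by
  set Ej : ℕ → Lp ℝ 2 μ := fun j => (he2 j).toLp (e j) with hEj
  have key : ∀ (f f' : ℝ → ℝ) (hf : MemLp f 2 μ) (hf' : MemLp f' 2 μ),
      (inner ℝ (hf.toLp f) (hf'.toLp f') : ℝ) = ∫ x, f x * f' x ∂μ := by
    intro f f' hf hf'
    rw [L2.inner_def]
    refine integral_congr_ae ?_
    filter_upwards [hf.coeFn_toLp, hf'.coeFn_toLp] with x hx hx'
    simp [hx, hx', RCLike.inner_apply, starRingEnd_apply, star_trivial, mul_comm]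
  have hOn : Orthonormal ℝ Ej := by
    rw [orthonormal_iff_ite]
    intro j k
    rw [hEj]
    simp only
    rw [key _ _ (he2 j) (he2 k), horth j k]
  have hbot : (Submodule.span ℝ (Set.range Ej))ᗮ = ⊥ := by
    rw [Submodule.eq_bot_iff]
    intro f hf
    have hz : ∀ j, ∫ x, f x * e j x ∂μ = 0 := by
      intro j
      have h1 : (inner ℝ (Ej j) f : ℝ) = 0 :=
        (Submodule.mem_orthogonal _ f).1 hf (Ej j)
          (Submodule.subset_span (Set.mem_range_self j))
      have h2 : (inner ℝ ((Lp.memLp f).toLp ⇑f) (Ej j) : ℝ) = 0 := by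
        rw [Lp.toLp_coeFn f (Lp.memLp f), real_inner_comm]; exact h1
      rw [key _ _ (Lp.memLp f) (he2 j)] at h2
      exact h2
    have := htotal ⇑f (Lp.memLp f) hz
    exact Lp.eq_zero_iff_ae_eq_zero.2 this
  let B : HilbertBasis ℕ ℝ (Lp ℝ 2 μ) := HilbertBasis.mkOfOrthogonalEqBot hOn hbot
  have hB : ⇑B = Ej := HilbertBasis.coe_mkOfOrthogonalEqBot hOn hbot
  have hsum := B.hasSum_inner_mul_inner (hh.toLp h) (hg.toLp g)
  rw [key _ _ hh hg] at hsum
  have heq : (fun j => (inner ℝ (hh.toLp h) (B j) : ℝ) * inner ℝ (B j) (hg.toLp g))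
      = fun j => (∫ x, h x * e j x ∂μ) * (∫ x, g x * e j x ∂μ) := by
    funext j
    have h1 : B j = Ej j := by rw [hB]
    rw [h1]
    rw [show (inner ℝ (Ej j) (hg.toLp g) : ℝ) = inner ℝ (hg.toLp g) (Ej j) from real_inner_comm _ _]
    rw [key _ _ hh (he2 j), key _ _ hg (he2 j)]
  rw [heq] at hsum
  exact hsum.tendsto_sum_nat.comp (tendsto_add_atTop_nat 1)

lemma stmt18_int_mul (μ : Measure ℝ) [IsProbabilityMeasure μ] {f f' : ℝ → ℝ}
    (hf : MemLp f 2 μ) (hf' : MemLp f' 2 μ) :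
    Integrable (fun x => f x * f' x) μ := by
  have hpqr : (1 : ENNReal) / 1 = 1 / 2 + 1 / 2 := by
    simp only [one_div, inv_one]; rw [ENNReal.inv_two_add_inv_two]
  have := hf'.smul (φ := f) hf (hpqr := ⟨by rw [ENNReal.inv_two_add_inv_two, inv_one]⟩)
  rw [← memLp_one_iff_integrable]
  simpa [Pi.smul_apply', smul_eq_mul, Pi.mul_def] using this


lemma stmt18_limit {E : Type*} [MeasurableSpace E] (ν : Measure E)
    [IsProbabilityMeasure ν] (S T A B : ℕ → E → ℝ) (Φh Φg F2 F11 : E → ℝ)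
    (cn : ℕ → ℝ) (c : ℝ)
    (hSm : ∀ n, AEStronglyMeasurable (S n) ν)
    (hTm : ∀ n, AEStronglyMeasurable (T n) ν)
    (hAm : ∀ n, AEStronglyMeasurable (A n) ν)
    (hBm : ∀ n, AEStronglyMeasurable (B n) ν)
    (hΦh : MemLp Φh 2 ν) (hΦg : MemLp Φg 2 ν)
    (hF2m : AEStronglyMeasurable F2 ν) (hF11m : AEStronglyMeasurable F11 ν)
    (hS : Tendsto (fun n => eLpNorm (fun ω => S n ω - Φh ω) 2 ν) atTop (nhds 0))
    (hT : Tendsto (fun n => eLpNorm (fun ω => T n ω - Φg ω) 2 ν) atTop (nhds 0))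
    (hA : Tendsto (fun n => eLpNorm (fun ω => A n ω - F2 ω) 2 ν) atTop (nhds 0))
    (hB : Tendsto (fun n => eLpNorm (fun ω => B n ω - F11 ω) 2 ν) atTop (nhds 0))
    (hcn : Tendsto cn atTop (nhds c))
    (hPQ : ∀ n ω, S n ω * T n ω = A n ω + B n ω + cn n) :
    ∀ᵐ ω ∂ν, Φh ω * Φg ω = F2 ω + F11 ω + c := by
  have hpqr : (1 : ENNReal) / 1 = 1 / 2 + 1 / 2 := by
    simp only [one_div, inv_one]; rw [ENNReal.inv_two_add_inv_two]
  have mΦh := hΦh.aestronglyMeasurable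
  have mΦg := hΦg.aestronglyMeasurable
  -- the error bound
  set D : ℕ → ENNReal := fun n =>
    eLpNorm Φh 2 ν * eLpNorm (fun ω => Φg ω - T n ω) 2 ν
    + (eLpNorm (fun ω => Φh ω - S n ω) 2 ν * eLpNorm (T n) 2 ν
    + (eLpNorm (fun ω => A n ω - F2 ω) 2 ν
    + (eLpNorm (fun ω => B n ω - F11 ω) 2 ν + (‖cn n - c‖₊ : ENNReal)))) with hD
  have herr : ∀ n, eLpNorm (fun ω => Φh ω * Φg ω - (F2 ω + F11 ω + c)) 1 ν ≤ D n := by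
    intro n
    have hdec : (fun ω => Φh ω * Φg ω - (F2 ω + F11 ω + c))
        = fun ω => (Φh ω * (Φg ω - T n ω)) + (((Φh ω - S n ω) * T n ω)
          + ((A n ω - F2 ω) + ((B n ω - F11 ω) + (cn n - c)))) := by
      funext ω
      linear_combination hPQ n ω
    have m1 : AEStronglyMeasurable (fun ω => Φh ω * (Φg ω - T n ω)) ν :=
      mΦh.mul (mΦg.sub (hTm n))
    have m2 : AEStronglyMeasurable (fun ω => (Φh ω - S n ω) * T n ω) ν :=
      (mΦh.sub (hSm n)).mul (hTm n)
    have m3 : AEStronglyMeasurable (fun ω => A n ω - F2 ω) ν := (hAm n).sub hF2m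
    have m4 : AEStronglyMeasurable (fun ω => B n ω - F11 ω) ν := (hBm n).sub hF11m
    have m5 : AEStronglyMeasurable (fun _ : E => cn n - c) ν := aestronglyMeasurable_const
    have b1 : eLpNorm (fun ω => Φh ω * (Φg ω - T n ω)) 1 ν
        ≤ eLpNorm Φh 2 ν * eLpNorm (fun ω => Φg ω - T n ω) 2 ν := by
      simpa [smul_eq_mul, Pi.mul_def] using
        eLpNorm_smul_le_mul_eLpNorm (f := fun ω => Φg ω - T n ω) (φ := Φh)
          (mΦg.sub (hTm n)) mΦh (hpqr := ⟨by rw [ENNReal.inv_two_add_inv_two, inv_one]⟩)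
    have b2 : eLpNorm (fun ω => (Φh ω - S n ω) * T n ω) 1 ν
        ≤ eLpNorm (fun ω => Φh ω - S n ω) 2 ν * eLpNorm (T n) 2 ν := by
      simpa [smul_eq_mul, Pi.mul_def] using
        eLpNorm_smul_le_mul_eLpNorm (f := T n) (φ := fun ω => Φh ω - S n ω)
          (hTm n) (mΦh.sub (hSm n)) (hpqr := ⟨by rw [ENNReal.inv_two_add_inv_two, inv_one]⟩)
    have b3 : eLpNorm (fun ω => A n ω - F2 ω) 1 ν
        ≤ eLpNorm (fun ω => A n ω - F2 ω) 2 ν :=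
      eLpNorm_le_eLpNorm_of_exponent_le one_le_two m3
    have b4 : eLpNorm (fun ω => B n ω - F11 ω) 1 ν
        ≤ eLpNorm (fun ω => B n ω - F11 ω) 2 ν :=
      eLpNorm_le_eLpNorm_of_exponent_le one_le_two m4
    have b5 : eLpNorm (fun _ : E => cn n - c) 1 ν = (‖cn n - c‖₊ : ENNReal) := by
      rw [eLpNorm_const _ one_ne_zero (NeZero.ne ν)]
      simp
      exact enorm_eq_nnnorm _
    calc eLpNorm (fun ω => Φh ω * Φg ω - (F2 ω + F11 ω + c)) 1 ν
        = eLpNorm (fun ω => (Φh ω * (Φg ω - T n ω)) + (((Φh ω - S n ω) * T n ω)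
          + ((A n ω - F2 ω) + ((B n ω - F11 ω) + (cn n - c))))) 1 ν := by rw [hdec]
      _ ≤ eLpNorm (fun ω => Φh ω * (Φg ω - T n ω)) 1 ν
          + eLpNorm (fun ω => ((Φh ω - S n ω) * T n ω)
            + ((A n ω - F2 ω) + ((B n ω - F11 ω) + (cn n - c)))) 1 ν :=
        eLpNorm_add_le m1 (m2.add (m3.add (m4.add m5))) le_rfl
      _ ≤ eLpNorm (fun ω => Φh ω * (Φg ω - T n ω)) 1 ν
          + (eLpNorm (fun ω => (Φh ω - S n ω) * T n ω) 1 ν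
            + eLpNorm (fun ω => (A n ω - F2 ω) + ((B n ω - F11 ω) + (cn n - c))) 1 ν) :=
        add_le_add le_rfl (eLpNorm_add_le m2 (m3.add (m4.add m5)) le_rfl)
      _ ≤ eLpNorm (fun ω => Φh ω * (Φg ω - T n ω)) 1 ν
          + (eLpNorm (fun ω => (Φh ω - S n ω) * T n ω) 1 ν
            + (eLpNorm (fun ω => A n ω - F2 ω) 1 ν
              + eLpNorm (fun ω => (B n ω - F11 ω) + (cn n - c)) 1 ν)) := by
        gcongr
        exact eLpNorm_add_le m3 (m4.add m5) le_rfl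
      _ ≤ eLpNorm (fun ω => Φh ω * (Φg ω - T n ω)) 1 ν
          + (eLpNorm (fun ω => (Φh ω - S n ω) * T n ω) 1 ν
            + (eLpNorm (fun ω => A n ω - F2 ω) 1 ν
              + (eLpNorm (fun ω => B n ω - F11 ω) 1 ν
                + eLpNorm (fun _ : E => cn n - c) 1 ν))) := by
        gcongr
        exact eLpNorm_add_le m4 m5 le_rfl
      _ ≤ D n := by
        rw [hD, b5]
        exact add_le_add b1 (add_le_add b2 (add_le_add b3 (add_le_add b4 le_rfl)))
  -- D tends to 0
  have hS' : Tendsto (fun n => eLpNorm (fun ω => Φh ω - S n ω) 2 ν) atTop (nhds 0) := by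
    have : (fun n => eLpNorm (fun ω => Φh ω - S n ω) 2 ν)
        = fun n => eLpNorm (fun ω => S n ω - Φh ω) 2 ν := by
      funext n; exact eLpNorm_sub_comm Φh (S n) 2 ν
    rw [this]; exact hS
  have hT' : Tendsto (fun n => eLpNorm (fun ω => Φg ω - T n ω) 2 ν) atTop (nhds 0) := by
    have : (fun n => eLpNorm (fun ω => Φg ω - T n ω) 2 ν)
        = fun n => eLpNorm (fun ω => T n ω - Φg ω) 2 ν := by
      funext n; exact eLpNorm_sub_comm Φg (T n) 2 ν
    rw [this]; exact hT
  have t1 : Tendsto (fun n => eLpNorm Φh 2 ν * eLpNorm (fun ω => Φg ω - T n ω) 2 ν)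
      atTop (nhds 0) := by
    have := ENNReal.Tendsto.const_mul (a := eLpNorm Φh 2 ν) hT'
      (Or.inr hΦh.eLpNorm_ne_top)
    simpa using this
  have hTb : ∀ n, eLpNorm (T n) 2 ν
      ≤ eLpNorm (fun ω => T n ω - Φg ω) 2 ν + eLpNorm Φg 2 ν := by
    intro n
    have hfun : T n = fun ω => (T n ω - Φg ω) + Φg ω := by funext ω; ring
    calc eLpNorm (T n) 2 ν = eLpNorm (fun ω => (T n ω - Φg ω) + Φg ω) 2 ν := by
          rw [← hfun]
      _ ≤ _ := eLpNorm_add_le ((hTm n).sub mΦg) mΦg one_le_two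
  have t2 : Tendsto (fun n => eLpNorm (fun ω => Φh ω - S n ω) 2 ν * eLpNorm (T n) 2 ν)
      atTop (nhds 0) := by
    have tU : Tendsto (fun n => eLpNorm (fun ω => Φh ω - S n ω) 2 ν *
        (eLpNorm (fun ω => T n ω - Φg ω) 2 ν + eLpNorm Φg 2 ν)) atTop
        (nhds (0 * (0 + eLpNorm Φg 2 ν))) := by
      refine ENNReal.Tendsto.mul hS' ?_ (hT.add tendsto_const_nhds) ?_
      · right
        simp [hΦg.eLpNorm_ne_top]
      · right
        simp
    rw [zero_mul] at tU
    refine tendsto_of_tendsto_of_tendsto_of_le_of_le tendsto_const_nhds tU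
      (fun n => zero_le) (fun n => mul_le_mul' le_rfl (hTb n))
  have t5 : Tendsto (fun n => (‖cn n - c‖₊ : ENNReal)) atTop (nhds 0) := by
    have h0 : Tendsto (fun n => cn n - c) atTop (nhds 0) := by
      simpa using hcn.sub (tendsto_const_nhds (x := c))
    have h1 := (continuous_nnnorm.tendsto (0 : ℝ)).comp h0
    rw [nnnorm_zero] at h1
    exact ENNReal.tendsto_coe.2 h1
  have hDt : Tendsto D atTop (nhds 0) := by
    have := t1.add (t2.add (hA.add (hB.add t5)))
    simpa using this
  have h0 : eLpNorm (fun ω => Φh ω * Φg ω - (F2 ω + F11 ω + c)) 1 ν ≤ 0 :=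
    ge_of_tendsto hDt (Eventually.of_forall herr)
  have merr : AEStronglyMeasurable (fun ω => Φh ω * Φg ω - (F2 ω + F11 ω + c)) ν :=
    (mΦh.mul mΦg).sub ((hF2m.add hF11m).add aestronglyMeasurable_const)
  have hz := (eLpNorm_eq_zero_iff merr one_ne_zero).1 (le_antisymm h0 zero_le)
  filter_upwards [hz] with ω hω
  have : Φh ω * Φg ω - (F2 ω + F11 ω + c) = 0 := hω
  linarith

/-- With `(X k)` a mutually independent, centered, reduced
sequence with uniformly bounded `p`-th moments for every `p > 1`, `(e j)` a
Hilbert basis of `H = L²(ℝ, μ)`, `Φ h` the `L²(ν)`-limit of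
`∑_{k≤n} ⟨h, e k⟩ X k`, `φ⁽²⁾ f` the limit of
`∑_{j≤N} ⟨f, e j ⊗ e j⟩ (X j ² - 1)` and `φ⁽¹'¹⁾ f` the limit of
`∑_{j=1}^N (∑_{k<j} ⟨f, e j ⊗ e k⟩ X k) X j`, one has, for `h, g ∈ H`,
`Φ h · Φ g ∈ L²(ν)` and
`Φ h · Φ g = φ⁽²⁾(h ⊗ g) + φ⁽¹'¹⁾(h ⊗ g + g ⊗ h) + ⟨h, g⟩` in `L²(ν)`. -/
theorem stmt_18 {E : Type*} [MeasurableSpace E] (ν : Measure E)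
    [IsProbabilityMeasure ν] (X : ℕ → E → ℝ) (hXm : ∀ k, Measurable (X k))
    (hindep : ProbabilityTheory.iIndepFun
      (m := fun _ : ℕ => (inferInstance : MeasurableSpace ℝ)) X ν)
    (hcent : ∀ k, ∫ ω, X k ω ∂ν = 0)
    (hred : ∀ k, ∫ ω, X k ω ^ 2 ∂ν = 1)
    (hmom : ∀ p : ENNReal, 1 < p → p ≠ ⊤ →
      ∃ C : ENNReal, C ≠ ⊤ ∧ ∀ k, eLpNorm (X k) p ν ≤ C)
    (μ : Measure ℝ) [IsProbabilityMeasure μ]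
    (e : ℕ → ℝ → ℝ) (he2 : ∀ j, MemLp (e j) 2 μ)
    (horth : ∀ j k, ∫ x, e j x * e k x ∂μ = if j = k then (1 : ℝ) else 0)
    (htotal : ∀ f : ℝ → ℝ, MemLp f 2 μ →
      (∀ j, ∫ x, f x * e j x ∂μ = 0) → f =ᵐ[μ] 0)
    (coef : (ℝ × ℝ → ℝ) → ℕ → ℕ → ℝ)
    (hcoef : ∀ (f : ℝ × ℝ → ℝ) (j k : ℕ),
      coef f j k = ∫ q, f q * (e j q.1 * e k q.2) ∂(μ.prod μ))
    (h g : ℝ → ℝ) (hh : MemLp h 2 μ) (hg : MemLp g 2 μ)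
    (Φh Φg F2 F11 : E → ℝ)
    (hΦh : MemLp Φh 2 ν ∧ Tendsto (fun n : ℕ => eLpNorm
      (fun ω => (∑ k ∈ Finset.range (n + 1), (∫ x, h x * e k x ∂μ) * X k ω)
        - Φh ω) 2 ν) atTop (nhds 0))
    (hΦg : MemLp Φg 2 ν ∧ Tendsto (fun n : ℕ => eLpNorm
      (fun ω => (∑ k ∈ Finset.range (n + 1), (∫ x, g x * e k x ∂μ) * X k ω)
        - Φg ω) 2 ν) atTop (nhds 0))
    (hF2 : MemLp F2 2 ν ∧ Tendsto (fun N : ℕ => eLpNorm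
      (fun ω => (∑ j ∈ Finset.range (N + 1),
        coef (fun q => h q.1 * g q.2) j j * (X j ω ^ 2 - 1)) - F2 ω) 2 ν)
      atTop (nhds 0))
    (hF11 : MemLp F11 2 ν ∧ Tendsto (fun N : ℕ => eLpNorm
      (fun ω => (∑ j ∈ Finset.Icc 1 N,
        (∑ k ∈ Finset.range j,
          coef (fun q => h q.1 * g q.2 + g q.1 * h q.2) j k * X k ω) * X j ω)
        - F11 ω) 2 ν) atTop (nhds 0)) :
    MemLp (fun ω => Φh ω * Φg ω) 2 ν ∧
    (∀ᵐ ω ∂ν, Φh ω * Φg ω = F2 ω + F11 ω + ∫ x, h x * g x ∂μ) := by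
  classical
  have hc2 : ∀ j k, coef (fun q => h q.1 * g q.2) j k
      = (∫ x, h x * e j x ∂μ) * (∫ x, g x * e k x ∂μ) := by
    intro j k
    rw [hcoef]
    calc ∫ q, (h q.1 * g q.2) * (e j q.1 * e k q.2) ∂(μ.prod μ)
        = ∫ q : ℝ × ℝ, (h q.1 * e j q.1) * (g q.2 * e k q.2) ∂(μ.prod μ) :=
          integral_congr_ae (Filter.Eventually.of_forall fun q => by ring)
      _ = _ := integral_prod_mul (f := fun x => h x * e j x) (g := fun y => g y * e k y)
  have hc11 : ∀ j k, coef (fun q => h q.1 * g q.2 + g q.1 * h q.2) j k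
      = (∫ x, h x * e j x ∂μ) * (∫ x, g x * e k x ∂μ)
        + (∫ x, g x * e j x ∂μ) * (∫ x, h x * e k x ∂μ) := by
    intro j k
    rw [hcoef]
    have i1 : Integrable (fun q : ℝ × ℝ => (h q.1 * e j q.1) * (g q.2 * e k q.2)) (μ.prod μ) :=
      (stmt18_int_mul μ hh (he2 j)).mul_prod (stmt18_int_mul μ hg (he2 k))
    have i2 : Integrable (fun q : ℝ × ℝ => (g q.1 * e j q.1) * (h q.2 * e k q.2)) (μ.prod μ) :=
      (stmt18_int_mul μ hg (he2 j)).mul_prod (stmt18_int_mul μ hh (he2 k))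
    calc ∫ q, (h q.1 * g q.2 + g q.1 * h q.2) * (e j q.1 * e k q.2) ∂(μ.prod μ)
        = ∫ q : ℝ × ℝ, ((h q.1 * e j q.1) * (g q.2 * e k q.2)
            + (g q.1 * e j q.1) * (h q.2 * e k q.2)) ∂(μ.prod μ) :=
          integral_congr_ae (Filter.Eventually.of_forall fun q => by ring)
      _ = _ := by
          rw [integral_add i1 i2,
            integral_prod_mul (f := fun x => h x * e j x) (g := fun y => g y * e k y),
            integral_prod_mul (f := fun x => g x * e j x) (g := fun y => h y * e k y)]
  have hparseval := stmt18_parseval μ e he2 horth htotal h g hh hg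
  have hae : ∀ᵐ ω ∂ν, Φh ω * Φg ω = F2 ω + F11 ω + ∫ x, h x * g x ∂μ := by
    refine stmt18_limit ν
      (fun n ω => ∑ k ∈ Finset.range (n + 1), (∫ x, h x * e k x ∂μ) * X k ω)
      (fun n ω => ∑ k ∈ Finset.range (n + 1), (∫ x, g x * e k x ∂μ) * X k ω)
      (fun n ω => ∑ j ∈ Finset.range (n + 1),
        coef (fun q => h q.1 * g q.2) j j * (X j ω ^ 2 - 1))
      (fun n ω => ∑ j ∈ Finset.Icc 1 n, (∑ k ∈ Finset.range j,
        coef (fun q => h q.1 * g q.2 + g q.1 * h q.2) j k * X k ω) * X j ω)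
      Φh Φg F2 F11
      (fun n => ∑ j ∈ Finset.range (n + 1),
        (∫ x, h x * e j x ∂μ) * (∫ x, g x * e j x ∂μ))
      (∫ x, h x * g x ∂μ)
      ?_ ?_ ?_ ?_ hΦh.1 hΦg.1 hF2.1.aestronglyMeasurable hF11.1.aestronglyMeasurable
      hΦh.2 hΦg.2 hF2.2 hF11.2 hparseval ?_
    · exact fun n =>
        (Finset.measurable_sum _ fun k _ => (hXm k).const_mul _).aestronglyMeasurable
    · exact fun n =>
        (Finset.measurable_sum _ fun k _ => (hXm k).const_mul _).aestronglyMeasurable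
    · exact fun n => (Finset.measurable_sum _ fun j _ =>
        (((hXm j).pow_const 2).sub measurable_const).const_mul _).aestronglyMeasurable
    · exact fun n => (Finset.measurable_sum _ fun j _ =>
        (Finset.measurable_sum _ fun k _ => (hXm k).const_mul _).mul
          (hXm j)).aestronglyMeasurable
    · intro n ω
      simp only [hc2, hc11]
      exact stmt18_expand (fun k => ∫ x, h x * e k x ∂μ)
        (fun k => ∫ x, g x * e k x ∂μ) (fun k => X k ω) n
  refine ⟨?_, hae⟩
  have hL : MemLp (fun ω => F2 ω + F11 ω + ∫ x, h x * g x ∂μ) 2 ν :=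
    (hF2.1.add hF11.1).add (memLp_const _)
  exact (memLp_congr_ae hae).2 hL
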